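/- With the same construction as above (t = n copies of each vertex symbol, s_i = v_i^n · d(v_i)): if A' = {v_1,...,v_k} is a clique in G, then there exists a permutation π(t) of t such that every string s_1,...,s_k is a substring of π(t). Conversely, if some permutation of t contains strings s_{i_1},...,s_{i_k} as substrings, then {v_{i_1},...,v_{i_k}} is a clique in G. -/

import Mathlib

open List

private lemma sum_map_single {α : Type*} (f : α → ℕ) (w : α) (m : ℕ) :
    ∀ L : List α, L.Nodup → w ∈ L → f w = m → (∀ i ∈ L, i ≠ w → f i = 0) →
      (L.map f).sum = m := by
  intro L
  induction L with
  | nil => simp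
  | cons a L ih =>
    intro hnd hw hfw hz
    rcases mem_cons.1 hw with h | h
    · subst h
      have : ∀ i ∈ L, f i = 0 := fun i hi =>
        hz i (mem_cons_of_mem _ hi) (fun he => (nodup_cons.1 hnd).1 (he ▸ hi))
      have hL : (L.map f).sum = 0 := by
        induction L with
        | nil => simp
        | cons b M ihM => simp_all
      simp [hL, hfw]
    · have haw : a ≠ w := fun he => (nodup_cons.1 hnd).1 (he ▸ h)
      have := ih (nodup_cons.1 hnd).2 h hfw (fun i hi hne => hz i (mem_cons_of_mem _ hi) hne)
      simp [this, hz a (mem_cons_self ..) haw]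

private lemma sum_map_le_length {α : Type*} (f : α → ℕ) :
    ∀ L : List α, (∀ i ∈ L, f i ≤ 1) → (L.map f).sum ≤ L.length := by
  intro L
  induction L with
  | nil => simp
  | cons a L ih =>
    intro h
    simp only [map_cons, sum_cons, length_cons]
    have := ih (fun i hi => h i (mem_cons_of_mem _ hi))
    have := h a (mem_cons_self ..)
    omega

private lemma aux_overlap {n : ℕ} (d : Fin n → List (Fin n)) (l : List (Fin n)) (i j : Fin n)
    (hcount : l.count i = n) (hii : i ∉ d i) (hij : i ∈ d j)
    (u v u' v' : List (Fin n))
    (h1 : u ++ ((replicate n i ++ d i) ++ v) = l)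
    (h2 : u' ++ ((replicate n j ++ d j) ++ v') = l)
    (hle : u.length ≤ u'.length) : False := by
  have hdropi : l.drop (u.length + n) = d i ++ v := by
    rw [← h1, show u ++ ((replicate n i ++ d i) ++ v) = (u ++ replicate n i) ++ (d i ++ v) by
      simp, drop_left' (by simp)]
  have hdropj : l.drop (u'.length + n) = d j ++ v' := by
    rw [← h2, show u' ++ ((replicate n j ++ d j) ++ v') = (u' ++ replicate n j) ++ (d j ++ v') by
      simp, drop_left' (by simp)]
  have h0 : count i (l.drop (u.length + n)) = 0 := by
    have hdi : count i (d i) = 0 := count_eq_zero.2 hii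
    have : count i l = count i u + (n + (count i (d i) + count i v)) := by
      rw [← h1]; simp [count_append, count_replicate_self]
    rw [hdropi, count_append]
    omega
  have hsuf : l.drop (u'.length + n) <:+ l.drop (u.length + n) := by
    have h := drop_suffix ((u'.length + n) - (u.length + n)) (l.drop (u.length + n))
    rwa [drop_drop, show u.length + n + (u'.length + n - (u.length + n)) = u'.length + n
      from by omega] at h
  have : i ∈ l.drop (u.length + n) := hsuf.subset (by rw [hdropj]; exact mem_append_left _ hij)
  rw [← count_pos_iff, h0] at this
  omega

/-- Clique reduction, correctness: with `t` containing `n` copies of each vertex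
symbol and `s_i = v_i^n · d(v_i)`, a set `A` of vertices is a clique iff some
permutation of `t` contains all the corresponding strings as substrings. -/
theorem stmt_4 {n : ℕ} (G : SimpleGraph (Fin n)) (d : Fin n → List (Fin n))
    (hdnodup : ∀ v, (d v).Nodup)
    (hd : ∀ v w, w ∈ d v ↔ w ≠ v ∧ ¬ G.Adj v w)
    (A : Finset (Fin n)) :
    (G.IsClique (A : Set (Fin n)) →
      ∃ l : List (Fin n), (∀ v, l.count v = n) ∧
        ∀ i ∈ A, (List.replicate n i ++ d i) <:+: l) ∧
    (∀ l : List (Fin n), (∀ v, l.count v = n) →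
      (∀ i ∈ A, (List.replicate n i ++ d i) <:+: l) →
      G.IsClique (A : Set (Fin n))) := by
  have hself : ∀ v : Fin n, v ∉ d v := fun v hv => ((hd v v).1 hv).1 rfl
  constructor
  · intro hclique
    classical
    set main : List (Fin n) := A.toList.flatMap (fun i => replicate n i ++ d i) with hmain
    have hcount_mem : ∀ w ∈ A, main.count w = n := by
      intro w hw
      rw [hmain, count_flatMap]
      refine sum_map_single _ w n A.toList A.nodup_toList (Finset.mem_toList.2 hw) ?_ ?_
      · simp [Function.comp, count_append, count_replicate_self, count_eq_zero.2 (hself w)]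
      · intro i hi hne
        have hiA : i ∈ A := Finset.mem_toList.1 hi
        have hadj : G.Adj i w := hclique (Finset.mem_coe.2 hiA) (Finset.mem_coe.2 hw) hne
        have hwd : w ∉ d i := fun hm => ((hd i w).1 hm).2 hadj
        simp [Function.comp, count_append, count_replicate, hne, count_eq_zero.2 hwd]
    have hcount_le : ∀ w, main.count w ≤ n := by
      intro w
      by_cases hw : w ∈ A
      · exact (hcount_mem w hw).le
      · rw [hmain, count_flatMap]
        have hb : ∀ i ∈ A.toList, (count w ∘ fun i => replicate n i ++ d i) i ≤ 1 := by
          intro i hi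
          have hne : ¬ w = i := fun he => hw (he ▸ Finset.mem_toList.1 hi)
          have : count w (d i) ≤ 1 := (nodup_iff_count_le_one.1 (hdnodup i)) w
          have hrep : count w (replicate n i) = 0 :=
            count_eq_zero.2 (fun hm => hne (mem_replicate.1 hm).2)
          simp only [Function.comp, count_append, hrep]
          omega
        calc (A.toList.map (count w ∘ fun i => replicate n i ++ d i)).sum
            ≤ A.toList.length := sum_map_le_length _ _ hb
          _ = A.card := A.length_toList
          _ ≤ n := by simpa using A.card_le_univ
    refine ⟨main ++ (List.finRange n).flatMap (fun w => replicate (n - main.count w) w), ?_, ?_⟩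
    · intro v
      have hjunk : count v ((List.finRange n).flatMap fun w => replicate (n - main.count w) w)
          = n - main.count v := by
        rw [count_flatMap]
        exact sum_map_single _ v (n - main.count v) _ (nodup_finRange n) (mem_finRange v)
          (by simp [Function.comp, count_replicate_self])
          (fun i _ hne => by simp [Function.comp, count_replicate, hne])
      rw [count_append, hjunk]
      have := hcount_le v
      omega
    · intro i hi
      exact (infix_flatMap_of_mem (Finset.mem_toList.2 hi)
        (fun i => replicate n i ++ d i)).trans (prefix_append main _).isInfix
  · intro l hc hinf
    intro i hi j hj hne
    by_contra hadj
    have hiA : i ∈ A := Finset.mem_coe.1 hi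
    have hjA : j ∈ A := Finset.mem_coe.1 hj
    have hji : j ∈ d i := (hd i j).2 ⟨hne.symm, hadj⟩
    have hij : i ∈ d j := (hd j i).2 ⟨hne, fun h => hadj h.symm⟩
    obtain ⟨u, v, h1⟩ := hinf i hiA
    obtain ⟨u', v', h2⟩ := hinf j hjA
    rcases le_total u.length u'.length with hle | hle
    · exact aux_overlap d l i j (hc i) (hself i) hij u v u' v'
        (by simpa [append_assoc] using h1) (by simpa [append_assoc] using h2) hle
    · exact aux_overlap d l j i (hc j) (hself j) hji u' v' u v
        (by simpa [append_assoc] using h2) (by simpa [append_assoc] using h1) hle
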